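/- Let (g,J) be a Lie algebra with almost complex structure and (E,I) an integrable (g,J)-module via ρ. Then the map δ : g^{0,1} × E^{1,0} → E^{1,0}, δ(X̄, V) = pr^{1,0}(ρ(X̄)V) (the (1,0)-component of ρ(X̄)V), is a ℂ-linear Lie algebra representation of g^{0,1} on E^{1,0}, i.e. δ([X̄,Ȳ],V) = δ(X̄, δ(Ȳ,V)) − δ(Ȳ, δ(X̄,V)). -/

import Mathlib

open TensorProduct

attribute [local instance 100] LieRing.ofAssociativeRing

/-- The complexification of a representation `ρ : g → End(E)`. -/
noncomputable def repComplexification (g E : Type) [LieRing g] [LieAlgebra ℝ g]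
    [AddCommGroup E] [Module ℝ E] (ρ : g →ₗ⁅ℝ⁆ Module.End ℝ E) :
    (ℂ ⊗[ℝ] g) →ₗ[ℂ] Module.End ℂ (ℂ ⊗[ℝ] E) :=
  LinearMap.liftBaseChange ℂ ((LinearMap.baseChangeHom ℝ ℂ E E).comp ρ.toLinearMap)

namespace DeltaAux

noncomputable def conjT (M : Type) [AddCommGroup M] [Module ℝ M] :
    (ℂ ⊗[ℝ] M) →ₗ[ℝ] (ℂ ⊗[ℝ] M) :=
  TensorProduct.map (Complex.conjAe.toLinearMap) LinearMap.id

variable {M N : Type} [AddCommGroup M] [Module ℝ M] [AddCommGroup N] [Module ℝ N]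

lemma conjT_tmul (c : ℂ) (m : M) :
    conjT M (c ⊗ₜ[ℝ] m) = (starRingEnd ℂ c) ⊗ₜ[ℝ] m := rfl

lemma conjT_conjT (w : ℂ ⊗[ℝ] M) : conjT M (conjT M w) = w := by
  induction w using TensorProduct.induction_on with
  | zero => simp
  | tmul c m => simp [conjT_tmul]
  | add x y hx hy => simp [hx, hy]

lemma conjT_smul (c : ℂ) (w : ℂ ⊗[ℝ] M) :
    conjT M (c • w) = (starRingEnd ℂ c) • conjT M w := by
  induction w using TensorProduct.induction_on with
  | zero => simp
  | tmul d m => rw [smul_tmul', conjT_tmul, conjT_tmul, smul_tmul']; simp [smul_eq_mul]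
  | add x y hx hy => simp [smul_add, hx, hy]

lemma conjT_baseChange (f : M →ₗ[ℝ] N) (w : ℂ ⊗[ℝ] M) :
    conjT N (f.baseChange ℂ w) = f.baseChange ℂ (conjT M w) := by
  induction w using TensorProduct.induction_on with
  | zero => simp
  | tmul c m => simp [conjT_tmul]
  | add x y hx hy => simp [hx, hy]

end DeltaAux

namespace DeltaAux

variable {g E : Type} [LieRing g] [LieAlgebra ℝ g]
    [AddCommGroup E] [Module ℝ E] (ρ : g →ₗ⁅ℝ⁆ Module.End ℝ E)

lemma rep_tmul (c : ℂ) (x : g) (v : ℂ ⊗[ℝ] E) :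
    repComplexification g E ρ (c ⊗ₜ[ℝ] x) v = c • ((ρ x).baseChange ℂ v) := by
  simp [repComplexification, LinearMap.liftBaseChange_tmul]

lemma conjT_rep (X : ℂ ⊗[ℝ] g) (v : ℂ ⊗[ℝ] E) :
    conjT E (repComplexification g E ρ X v) =
      repComplexification g E ρ (conjT g X) (conjT E v) := by
  induction X using TensorProduct.induction_on with
  | zero => simp
  | tmul c x =>
      rw [rep_tmul, conjT_tmul, rep_tmul, conjT_smul, conjT_baseChange]
  | add x y hx hy => simp [map_add, LinearMap.add_apply, hx, hy]

lemma rep_lie (X Y : ℂ ⊗[ℝ] g) (v : ℂ ⊗[ℝ] E) :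
    repComplexification g E ρ ⁅X, Y⁆ v =
      repComplexification g E ρ X (repComplexification g E ρ Y v) -
        repComplexification g E ρ Y (repComplexification g E ρ X v) := by
  induction X using TensorProduct.induction_on with
  | zero => simp only [zero_lie, map_zero, LinearMap.zero_apply, sub_zero, zero_sub, neg_zero]
  | tmul c x =>
      induction Y using TensorProduct.induction_on with
      | zero =>
          rw [lie_zero (c ⊗ₜ[ℝ] x)]
          simp only [map_zero, LinearMap.zero_apply, sub_self]
      | tmul d y =>
          rw [LieAlgebra.ExtendScalars.bracket_tmul]
          simp only [rep_tmul]
          rw [LieHom.map_lie]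
          have h : (⁅ρ x, ρ y⁆ : Module.End ℝ E) = (ρ x) ∘ₗ (ρ y) - (ρ y) ∘ₗ (ρ x) := rfl
          rw [h, LinearMap.baseChange_sub, LinearMap.baseChange_comp, LinearMap.baseChange_comp]
          simp only [LinearMap.sub_apply, LinearMap.comp_apply, map_smul, smul_sub, mul_smul]
          rw [smul_comm d c]
      | add y₁ y₂ h1 h2 =>
          rw [lie_add (c ⊗ₜ[ℝ] x) y₁ y₂]
          simp only [map_add, LinearMap.add_apply, h1, h2]
          abel
  | add x₁ x₂ h1 h2 =>
      simp only [add_lie, map_add, LinearMap.add_apply, h1, h2]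
      abel

end DeltaAux

namespace DeltaAux

variable {g E : Type} [LieRing g] [LieAlgebra ℝ g]
    [AddCommGroup E] [Module ℝ E] (ρ : g →ₗ⁅ℝ⁆ Module.End ℝ E)

lemma baseChange_invol {M : Type} [AddCommGroup M] [Module ℝ M]
    {f : M →ₗ[ℝ] M} (hf : ∀ v, f (f v) = -v) (w : ℂ ⊗[ℝ] M) :
    f.baseChange ℂ (f.baseChange ℂ w) = -w := by
  induction w using TensorProduct.induction_on with
  | zero => simp
  | tmul c m => simp [hf m, TensorProduct.tmul_neg]
  | add x y hx hy => rw [map_add, map_add, hx, hy, neg_add]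

lemma rep01 {J : g →ₗ[ℝ] g} {I : Module.End ℝ E}
    (hint : ∀ (X : ℂ ⊗[ℝ] g) (v : ℂ ⊗[ℝ] E),
        J.baseChange ℂ X = Complex.I • X →
        I.baseChange ℂ v = Complex.I • v →
        I.baseChange ℂ (repComplexification g E ρ X v) =
          Complex.I • repComplexification g E ρ X v)
    {X : ℂ ⊗[ℝ] g} {w : ℂ ⊗[ℝ] E}
    (hX : J.baseChange ℂ X = -(Complex.I • X))
    (hw : I.baseChange ℂ w = -(Complex.I • w)) :
    I.baseChange ℂ (repComplexification g E ρ X w) =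
      -(Complex.I • repComplexification g E ρ X w) := by
  have hX' : J.baseChange ℂ (conjT g X) = Complex.I • conjT g X := by
    rw [← conjT_baseChange, hX, map_neg, conjT_smul, Complex.conj_I, neg_smul, neg_neg]
  have hw' : I.baseChange ℂ (conjT E w) = Complex.I • conjT E w := by
    rw [← conjT_baseChange, hw, map_neg, conjT_smul, Complex.conj_I, neg_smul, neg_neg]
  have h := congrArg (conjT E) (hint (conjT g X) (conjT E w) hX' hw')
  rw [conjT_baseChange, conjT_rep, conjT_conjT, conjT_conjT, conjT_smul, Complex.conj_I,
    conjT_rep, conjT_conjT, conjT_conjT, neg_smul] at h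
  exact h

end DeltaAux

/-- Let `(g,J)` be a Lie algebra with integrable complex structure
and `(E,I)` an integrable `(g,J)`-module via `ρ` (i.e. `g^{1,0}` preserves
`E^{1,0}`).  Let `pr` be the projection of `E_ℂ` onto `E^{1,0}` along `E^{0,1}`.
Then `δ(X̄,V) = pr(ρ(X̄)V)` is a Lie algebra representation of `g^{0,1}` on
`E^{1,0}`: `δ([X̄,Ȳ],V) = δ(X̄, δ(Ȳ,V)) − δ(Ȳ, δ(X̄,V))`. -/
theorem delta_is_representation
    (g E : Type) [LieRing g] [LieAlgebra ℝ g] [FiniteDimensional ℝ g]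
    [AddCommGroup E] [Module ℝ E] [FiniteDimensional ℝ E]
    (J : g →ₗ[ℝ] g) (hJ : ∀ x : g, J (J x) = -x)
    (hNij : ∀ x y : g, ⁅x, y⁆ - ⁅J x, J y⁆ + J ⁅J x, y⁆ + J ⁅x, J y⁆ = 0)
    (I : Module.End ℝ E) (hI : ∀ v : E, I (I v) = -v)
    (ρ : g →ₗ⁅ℝ⁆ Module.End ℝ E)
    -- integrability of the module: `g^{1,0}` preserves `E^{1,0}`
    (hint : ∀ (X : ℂ ⊗[ℝ] g) (v : ℂ ⊗[ℝ] E),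
        J.baseChange ℂ X = Complex.I • X →
        I.baseChange ℂ v = Complex.I • v →
        I.baseChange ℂ (repComplexification g E ρ X v) =
          Complex.I • repComplexification g E ρ X v)
    -- `pr` is the projection onto `E^{1,0}` along `E^{0,1}`
    (pr : (ℂ ⊗[ℝ] E) →ₗ[ℂ] (ℂ ⊗[ℝ] E))
    (hpr1 : ∀ v : ℂ ⊗[ℝ] E, I.baseChange ℂ v = Complex.I • v → pr v = v)
    (hpr2 : ∀ v : ℂ ⊗[ℝ] E, I.baseChange ℂ v = -(Complex.I • v) → pr v = 0) :
    ∀ (X Y : ℂ ⊗[ℝ] g) (V : ℂ ⊗[ℝ] E),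
      J.baseChange ℂ X = -(Complex.I • X) →
      J.baseChange ℂ Y = -(Complex.I • Y) →
      I.baseChange ℂ V = Complex.I • V →
      pr (repComplexification g E ρ ⁅X, Y⁆ V) =
        pr (repComplexification g E ρ X (pr (repComplexification g E ρ Y V))) -
        pr (repComplexification g E ρ Y (pr (repComplexification g E ρ X V))) := by
  intro X Y V hX hY _
  set R := repComplexification g E ρ with hR
  set Ic := I.baseChange ℂ with hIcdef
  have hIc : ∀ w, Ic (Ic w) = -w := DeltaAux.baseChange_invol hI
  have hP : ∀ w : ℂ ⊗[ℝ] E,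
      Ic ((2⁻¹ : ℂ) • (w - Complex.I • Ic w)) =
        Complex.I • ((2⁻¹ : ℂ) • (w - Complex.I • Ic w)) := by
    intro w
    rw [map_smul, map_sub, map_smul, hIc w]
    match_scalars <;> simp [Complex.ext_iff]
  have hQ : ∀ w : ℂ ⊗[ℝ] E,
      Ic ((2⁻¹ : ℂ) • (w + Complex.I • Ic w)) =
        -(Complex.I • ((2⁻¹ : ℂ) • (w + Complex.I • Ic w))) := by
    intro w
    rw [map_smul, map_add, map_smul, hIc w]
    match_scalars <;> simp [Complex.ext_iff]
  have hpr : ∀ w : ℂ ⊗[ℝ] E, pr w = (2⁻¹ : ℂ) • (w - Complex.I • Ic w) := by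
    intro w
    have hsum : w = (2⁻¹ : ℂ) • (w - Complex.I • Ic w) +
        (2⁻¹ : ℂ) • (w + Complex.I • Ic w) := by module
    calc pr w = pr ((2⁻¹ : ℂ) • (w - Complex.I • Ic w) +
        (2⁻¹ : ℂ) • (w + Complex.I • Ic w)) := by rw [← hsum]
      _ = _ := by rw [map_add, hpr1 _ (hP w), hpr2 _ (hQ w), add_zero]
  have main : ∀ (Z : ℂ ⊗[ℝ] g), J.baseChange ℂ Z = -(Complex.I • Z) →
      ∀ w : ℂ ⊗[ℝ] E, pr (R Z (pr w)) = pr (R Z w) := by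
    intro Z hZ w
    have h1 : pr w = w - (2⁻¹ : ℂ) • (w + Complex.I • Ic w) := by rw [hpr w]; module
    rw [h1, map_sub, map_sub, hpr2 _ (DeltaAux.rep01 ρ hint hZ (hQ w)), sub_zero]
  rw [main X hX, main Y hY, ← map_sub, ← DeltaAux.rep_lie]
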